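/- Let d ≥ 1 be an integer, b > 0, and 0 < ε ≤ 2b. Let e₁ ∈ ℝ^d denote the first standard basis vector. Then the intersection of the two ℓ₁-balls {w ∈ ℝ^d : ‖w‖₁ ≤ b} and {w ∈ ℝ^d : ‖w − ε·e₁‖₁ ≤ b} is contained in the ℓ₁-ball {w ∈ ℝ^d : ‖w − (ε/2)·e₁‖₁ ≤ b − ε/2} of radius b − ε/2 centered at (ε/2)·e₁. -/
import Mathlib


open MeasureTheory

/-- **Lemma 2.** The intersection of the ℓ₁-ball of radius `b` centered at the origin and
the ℓ₁-ball of radius `b` centered at `ε·e₁` is contained in the ℓ₁-ball of radius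
`b − ε/2` centered at `(ε/2)·e₁`. -/
theorem l1_balls_intersection_subset
    (d : ℕ) (hd : 0 < d) (b ε : ℝ) (hb : 0 < b) (hε : 0 < ε) (hεb : ε ≤ 2 * b) :
    {w : Fin d → ℝ | ∑ i, |w i| ≤ b} ∩
        {w : Fin d → ℝ |
          ∑ i, |w i - (Pi.single (⟨0, hd⟩ : Fin d) ε : Fin d → ℝ) i| ≤ b} ⊆
      {w : Fin d → ℝ |
        ∑ i, |w i - (Pi.single (⟨0, hd⟩ : Fin d) (ε / 2) : Fin d → ℝ) i| ≤ b - ε / 2} := by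
  set i0 : Fin d := ⟨0, hd⟩
  rintro w ⟨h1, h2⟩
  simp only [Set.mem_setOf_eq] at h1 h2 ⊢
  have key : ∀ c : ℝ, ∑ i, |w i - (Pi.single i0 c : Fin d → ℝ) i|
      = |w i0 - c| + ∑ i ∈ Finset.univ.erase i0, |w i| := by
    intro c
    rw [← Finset.add_sum_erase _ _ (Finset.mem_univ i0)]
    rw [Pi.single_eq_same]
    congr 1
    refine Finset.sum_congr rfl fun i hi => ?_
    rw [Pi.single_eq_of_ne (Finset.ne_of_mem_erase hi), sub_zero]
  have key0 : ∑ i, |w i| = |w i0| + ∑ i ∈ Finset.univ.erase i0, |w i| :=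
    (Finset.add_sum_erase _ _ (Finset.mem_univ i0)).symm
  rw [key] at h2 ⊢
  rw [key0] at h1
  set x := w i0
  rcases le_total x (ε / 2) with hx | hx
  · have e1 : |x - ε / 2| = ε / 2 - x := by rw [abs_of_nonpos (by linarith)]; ring
    have e2 : ε - x ≤ |x - ε| := by
      have := neg_abs_le (x - ε); linarith
    linarith
  · have e1 : |x - ε / 2| = x - ε / 2 := abs_of_nonneg (by linarith)
    have e2 : x ≤ |x| := le_abs_self x
    linarith
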